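/- Let R = ℚ[p₁₁, p₁₂, p₁₃, p₂₁, p₂₂, p₂₃, p₃₁, p₃₂, p₃₃] and S = ℚ[μ, α₁, α₂, α₃, β₁, β₂, β₃, γ₁₂, γ₁₃, γ₂₃, γ₁₁, γ₂₂, γ₃₃], and let φ : R → S be the ℚ-algebra homomorphism of the 3×3 quasi-symmetry model, defined by φ(p_{ij}) = μ·α_i·β_j·γ_{ij}, where γ_{ij} denotes γ_{ji} when i > j. Then the kernel of φ is the principal ideal of R generated by the single binomial p₁₂p₂₃p₃₁ − p₁₃p₃₂p₂₁. -/

import Mathlib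

/-- Parameters of the 3×3 quasi-symmetry model: an overall effect `μ`, row effects `αᵢ`,
column effects `βⱼ`, and symmetric interaction parameters `γᵢⱼ = γⱼᵢ` (the parameter
`γᵢⱼ` is addressed through the ordered pair `(min i j, max i j)`). -/
inductive QSParam where
  | mu : QSParam
  | alpha : Fin 3 → QSParam
  | beta : Fin 3 → QSParam
  | gamma : Fin 3 → Fin 3 → QSParam

deriving instance DecidableEq for QSParam

open MvPolynomial

/-- The monomial homomorphism of the 3×3 quasi-symmetry model, sending
`p i j ↦ μ · αᵢ · βⱼ · γᵢⱼ`, where `γᵢⱼ` denotes `γⱼᵢ` when `i > j`. -/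
noncomputable def qsHom :
    MvPolynomial (Fin 3 × Fin 3) ℚ →ₐ[ℚ] MvPolynomial QSParam ℚ :=
  aeval fun c : Fin 3 × Fin 3 =>
    X QSParam.mu * X (QSParam.alpha c.1) * X (QSParam.beta c.2) *
      X (QSParam.gamma (min c.1 c.2) (max c.1 c.2))

/-- exponent weight of a cell -/
noncomputable def wt (c : Fin 3 × Fin 3) : QSParam →₀ ℕ :=
  Finsupp.single QSParam.mu 1 + Finsupp.single (QSParam.alpha c.1) 1 +
  Finsupp.single (QSParam.beta c.2) 1 +
  Finsupp.single (QSParam.gamma (min c.1 c.2) (max c.1 c.2)) 1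

noncomputable def Bmap (u : Fin 3 × Fin 3 →₀ ℕ) : QSParam →₀ ℕ := ∑ c : Fin 3 × Fin 3, u c • wt c

lemma prod_monomial {ι : Type*} (s : Finset ι) (f : ι → (QSParam →₀ ℕ)) :
    (∏ i ∈ s, monomial (f i) (1 : ℚ)) = monomial (∑ i ∈ s, f i) 1 := by
  classical
  induction s using Finset.induction_on with
  | empty => simp
  | insert _ _ h ih => simp [Finset.prod_insert h, Finset.sum_insert h, ih, monomial_mul]

lemma X_prod_eq (c : Fin 3 × Fin 3) :
    (X QSParam.mu * X (QSParam.alpha c.1) * X (QSParam.beta c.2) *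
      X (QSParam.gamma (min c.1 c.2) (max c.1 c.2)) : MvPolynomial QSParam ℚ)
      = monomial (wt c) 1 := by
  simp [wt, X, monomial_mul]

lemma qsHom_monomial (u : Fin 3 × Fin 3 →₀ ℕ) (c : ℚ) :
    qsHom (monomial u c) = monomial (Bmap u) c := by
  rw [qsHom, aeval_monomial]
  simp only [X_prod_eq, monomial_pow, one_pow]
  rw [Finsupp.prod_fintype _ _ (fun i => by simp), prod_monomial]
  rw [algebraMap_eq, C_mul_monomial, mul_one, Bmap]

lemma Bmap_apply (u : Fin 3 × Fin 3 →₀ ℕ) (t : QSParam) :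
    Bmap u t = ∑ c : Fin 3 × Fin 3, u c * wt c t := by
  rw [Bmap, Finsupp.finset_sum_apply]
  simp [Finsupp.smul_apply]

noncomputable def gQS : MvPolynomial (Fin 3 × Fin 3) ℚ :=
  X (0, 1) * X (1, 2) * X (2, 0) - X (0, 2) * X (2, 1) * X (1, 0)

lemma binomial_mem_aux (u w : Fin 3 × Fin 3 →₀ ℕ) (h : Bmap u = Bmap w)
    (hk : w (0, 1) ≤ u (0, 1)) :
    (monomial u 1 - monomial w 1 : MvPolynomial (Fin 3 × Fin 3) ℚ) ∈
      Ideal.span {gQS} := by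
  have e1 := DFunLike.congr_fun h (QSParam.gamma 0 0)
  have e2 := DFunLike.congr_fun h (QSParam.gamma 1 1)
  have e3 := DFunLike.congr_fun h (QSParam.gamma 2 2)
  have e4 := DFunLike.congr_fun h (QSParam.gamma 0 1)
  have e5 := DFunLike.congr_fun h (QSParam.gamma 0 2)
  have e6 := DFunLike.congr_fun h (QSParam.gamma 1 2)
  have e7 := DFunLike.congr_fun h (QSParam.alpha 0)
  have e8 := DFunLike.congr_fun h (QSParam.alpha 1)
  rw [Bmap_apply, Bmap_apply] at e1 e2 e3 e4 e5 e6 e7 e8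
  simp only [Fintype.sum_prod_type, Fin.sum_univ_three, wt, Finsupp.single_apply] at e1 e2 e3 e4 e5 e6 e7 e8
  simp at e1 e2 e3 e4 e5 e6 e7 e8
  set k := u (0, 1) - w (0, 1) with hkdef
  set sp : Fin 3 × Fin 3 →₀ ℕ :=
    Finsupp.single (0, 1) k + Finsupp.single (1, 2) k + Finsupp.single (2, 0) k with hsp
  set sm : Fin 3 × Fin 3 →₀ ℕ :=
    Finsupp.single (0, 2) k + Finsupp.single (2, 1) k + Finsupp.single (1, 0) k with hsm
  set m : Fin 3 × Fin 3 →₀ ℕ := u - sp with hm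
  have hu : u = m + sp := by
    ext c
    simp only [hm, hsp, Finsupp.add_apply, Finsupp.tsub_apply, Finsupp.single_apply]
    fin_cases c <;> simp <;> omega
  have hw : w = m + sm := by
    ext c
    simp only [hm, hsp, hsm, Finsupp.add_apply, Finsupp.tsub_apply, Finsupp.single_apply]
    fin_cases c <;> simp <;> omega
  have hspk : monomial sp (1:ℚ) = (X (0,1) * X (1,2) * X (2,0))^k := by
    rw [hsp]
    simp [X, monomial_mul, monomial_pow, smul_add, Finsupp.smul_single]
  have hsmk : monomial sm (1:ℚ) = (X (0,2) * X (2,1) * X (1,0))^k := by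
    rw [hsm]
    simp [X, monomial_mul, monomial_pow, smul_add, Finsupp.smul_single]
  have heq : monomial u (1:ℚ) - monomial w 1 =
      monomial m 1 * ((X (0,1) * X (1,2) * X (2,0))^k - (X (0,2) * X (2,1) * X (1,0))^k) := by
    rw [mul_sub, ← hspk, ← hsmk, hu, hw]
    simp [monomial_mul]
  rw [heq]
  exact Ideal.mem_span_singleton.2 (dvd_mul_of_dvd_right (sub_dvd_pow_sub_pow _ _ k) _)

lemma binomial_mem (u w : Fin 3 × Fin 3 →₀ ℕ) (h : Bmap u = Bmap w) :
    (monomial u 1 - monomial w 1 : MvPolynomial (Fin 3 × Fin 3) ℚ) ∈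
      Ideal.span {gQS} := by
  rcases le_total (w (0, 1)) (u (0, 1)) with hk | hk
  · exact binomial_mem_aux u w h hk
  · have h2 := (Ideal.span {gQS}).neg_mem (binomial_mem_aux w u h.symm hk)
    simpa using h2

lemma ker_subset : ∀ (n : ℕ) (f : MvPolynomial (Fin 3 × Fin 3) ℚ),
    f.support.card ≤ n → qsHom f = 0 → f ∈ Ideal.span {gQS} := by
  intro n
  induction n with
  | zero =>
    intro f hf _
    rw [Nat.le_zero, Finset.card_eq_zero, MvPolynomial.support_eq_empty] at hf
    simp [hf]
  | succ n ih =>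
    intro f hcard hker
    by_cases hf0 : f = 0
    · simp [hf0]
    obtain ⟨u, hu⟩ := (MvPolynomial.support_nonempty.2 hf0)
    have hc : coeff u f ≠ 0 := mem_support_iff.1 hu
    have hφ : qsHom f = ∑ v ∈ f.support, monomial (Bmap v) (coeff v f) := by
      conv_lhs => rw [f.as_sum]
      rw [map_sum]
      simp [qsHom_monomial]
    have hco : (∑ v ∈ f.support, if Bmap v = Bmap u then coeff v f else 0) = 0 := by
      have h0 : coeff (Bmap u) (qsHom f) = 0 := by rw [hker]; simp
      rw [hφ, coeff_sum] at h0
      simpa [coeff_monomial] using h0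
    have hex : ∃ w ∈ f.support, w ≠ u ∧ Bmap w = Bmap u := by
      by_contra hno
      push_neg at hno
      have hsingle : (∑ v ∈ f.support, if Bmap v = Bmap u then coeff v f else 0)
          = coeff u f := by
        rw [Finset.sum_eq_single_of_mem u hu]
        · simp
        · intro v hv hne
          rw [if_neg (hno v hv hne)]
      exact hc (hsingle ▸ hco)
    obtain ⟨w, hwsup, hwne, hwB⟩ := hex
    set c := coeff u f with hcdef
    set f' := f - (monomial u c - monomial w c) with hf'
    have hker' : qsHom f' = 0 := by
      rw [hf']
      simp [map_sub, qsHom_monomial, hker, hwB]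
    have hsub : f'.support ⊆ f.support.erase u := by
      intro x hx
      rw [mem_support_iff] at hx
      have hx' : coeff x f - ((if u = x then c else 0) - (if w = x then c else 0)) ≠ 0 := by
        simpa [hf', coeff_sub, coeff_monomial] using hx
      rw [Finset.mem_erase]
      have hxu : x ≠ u := by
        rintro rfl
        apply hx'
        rw [if_pos rfl, if_neg hwne, hcdef]
        ring
      refine ⟨hxu, ?_⟩
      rw [mem_support_iff]
      intro h0
      apply hx'
      have hxw : x ≠ w := by
        rintro rfl
        exact (mem_support_iff.1 hwsup) h0
      rw [h0, if_neg (Ne.symm hxu), if_neg (Ne.symm hxw)]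
      ring
    have hcard' : f'.support.card ≤ n := by
      have h1 := Finset.card_le_card hsub
      have h2 : (f.support.erase u).card < f.support.card :=
        Finset.card_erase_lt_of_mem hu
      omega
    have hmem' := ih f' hcard' hker'
    have hb : (monomial u c - monomial w c : MvPolynomial (Fin 3 × Fin 3) ℚ) ∈
        Ideal.span {gQS} := by
      have hCc : (monomial u c - monomial w c : MvPolynomial (Fin 3 × Fin 3) ℚ)
          = C c * (monomial u 1 - monomial w 1) := by
        simp [mul_sub, C_mul_monomial]
      rw [hCc]
      exact Ideal.mul_mem_left _ _ (binomial_mem u w hwB.symm)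
    have hfe : f = f' + (monomial u c - monomial w c) := by rw [hf']; ring
    rw [hfe]
    exact Ideal.add_mem _ hmem' hb

/-- The toric ideal of the 3×3 quasi-symmetry model, i.e. the kernel of the monomial
homomorphism `p_{ij} ↦ μ αᵢ βⱼ γᵢⱼ`, is the principal ideal generated by the single
binomial `p₁₂ p₂₃ p₃₁ − p₁₃ p₃₂ p₂₁` (written with 0-based indices). -/
theorem toric_ideal_qs_three_by_three :
    RingHom.ker qsHom =
      Ideal.span
        ({X (0, 1) * X (1, 2) * X (2, 0) - X (0, 2) * X (2, 1) * X (1, 0)} :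
          Set (MvPolynomial (Fin 3 × Fin 3) ℚ)) := by
  apply le_antisymm
  · intro f hf
    exact ker_subset f.support.card f le_rfl hf
  · rw [Ideal.span_le]
    rintro x hx
    simp only [Set.mem_singleton_iff] at hx
    subst hx
    rw [SetLike.mem_coe, RingHom.mem_ker]
    simp only [map_sub, map_mul, qsHom, aeval_X]
    rw [show ((1:Fin 3) ⊓ 2) = 1 by decide, show ((1:Fin 3) ⊔ 2) = 2 by decide,
      show ((2:Fin 3) ⊓ 1) = 1 by decide, show ((2:Fin 3) ⊔ 1) = 2 by decide,
      show ((0:Fin 3) ⊓ 1) = 0 by decide, show ((0:Fin 3) ⊔ 1) = 1 by decide,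
      show ((1:Fin 3) ⊓ 0) = 0 by decide, show ((1:Fin 3) ⊔ 0) = 1 by decide,
      show ((0:Fin 3) ⊓ 2) = 0 by decide, show ((0:Fin 3) ⊔ 2) = 2 by decide,
      show ((2:Fin 3) ⊓ 0) = 0 by decide, show ((2:Fin 3) ⊔ 0) = 2 by decide]
    ring
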